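/- arXiv:1611.01651 — 3 statements merged into one kernel-verified Lean document; each statement's English description precedes it below -/
import Mathlib

section
/- Let A be a C*-algebra, I = [α,β] a compact interval with α < β, and F : ℝ → A a function that is continuously differentiable on I with derivative F'. Then for every real ℓ with 0 < ℓ ≤ β − α and every t ∈ I one has the operator inequality F(t)*·F(t) ≤ (2/ℓ)·∫_I F(s)*·F(s) ds + 2ℓ·∫_I F'(s)*·F'(s) ds. -/
open MeasureTheory
set_option linter.unusedSectionVars false

section Aux

variable {A : Type*} [NormedRing A] [StarRing A] [CStarRing A] [CompleteSpace A]
    [NormedAlgebra ℂ A] [StarModule ℂ A] [PartialOrder A] [StarOrderedRing A]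

/-- integral of a.e.-nonneg function is nonneg in a C*-algebra -/
lemma aux_integral_nonneg {X : Type*} [MeasurableSpace X] {μ : Measure X} [IsFiniteMeasure μ]
    {f : X → A} (hf : Integrable f μ) (h : ∀ᵐ x ∂μ, 0 ≤ f x) : 0 ≤ ∫ x, f x ∂μ := by
  letI : CStarAlgebra A := ⟨⟩
  by_cases hμ : μ = 0
  · simp [hμ]
  have hc : μ Set.univ ≠ 0 := by simpa [Measure.measure_univ_eq_zero] using hμ
  set ν : Measure X := (μ Set.univ)⁻¹ • μ with hν
  haveI : IsProbabilityMeasure ν := by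
    constructor
    simp [hν, Measure.smul_apply, ENNReal.inv_mul_cancel hc (measure_ne_top μ _)]
  have hconv : Convex ℝ {x : A | 0 ≤ x} := fun x hx y hy a b ha hb _ =>
    add_nonneg (smul_nonneg ha hx) (smul_nonneg hb hy)
  have hmem : (∫ x, f x ∂ν) ∈ {x : A | 0 ≤ x} := by
    refine hconv.integral_mem (isClosed_Ici (a := (0:A))) ?_ (hf.smul_measure ?_)
    · exact h.filter_mono (MeasureTheory.Measure.ae_smul_measure_le _)
    · exact ENNReal.inv_ne_top.2 hc
  have hμν : μ = (μ Set.univ) • ν := by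
    rw [hν, smul_smul, ENNReal.mul_inv_cancel hc (measure_ne_top μ _), one_smul]
  calc (0:A) ≤ (μ Set.univ).toReal • ∫ x, f x ∂ν :=
        smul_nonneg ENNReal.toReal_nonneg hmem
    _ = ∫ x, f x ∂μ := by rw [hμν, integral_smul_measure]; simp [hν]

lemma aux_integral_mono {X : Type*} [MeasurableSpace X] {μ : Measure X} [IsFiniteMeasure μ]
    {f g : X → A} (hf : Integrable f μ) (hg : Integrable g μ) (h : ∀ᵐ x ∂μ, f x ≤ g x) :
    ∫ x, f x ∂μ ≤ ∫ x, g x ∂μ := by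
  have h0 : 0 ≤ ∫ x, (g x - f x) ∂μ :=
    aux_integral_nonneg (hg.sub hf) (h.mono fun x hx => sub_nonneg.2 hx)
  rwa [integral_sub hg hf, sub_nonneg] at h0

lemma aux_smul_mono {r : ℝ} (hr : 0 ≤ r) {x y : A} (h : x ≤ y) : r • x ≤ r • y := by
  have := smul_nonneg hr (sub_nonneg.2 h)
  rwa [smul_sub, sub_nonneg] at this

lemma aux_setIntegral_mono_set {S T : Set ℝ} (hS : MeasurableSet S) (hT : MeasurableSet T)
    (hST : S ⊆ T) (hTfin : volume T ≠ ⊤) {f : ℝ → A} (hf : IntegrableOn f T)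
    (h : ∀ x ∈ T, 0 ≤ f x) : ∫ x in S, f x ≤ ∫ x in T, f x := by
  haveI : IsFiniteMeasure (volume.restrict T) :=
    ⟨by rwa [Measure.restrict_apply_univ, lt_top_iff_ne_top]⟩
  have hTS : T = S ∪ (T \ S) := by rw [Set.union_diff_cancel hST]
  have hdisj : Disjoint S (T \ S) := Set.disjoint_sdiff_right.mono_left le_rfl
  have hsplit : ∫ x in T, f x = (∫ x in S, f x) + ∫ x in T \ S, f x := by
    have h2 := setIntegral_union (μ := volume) (f := f) hdisj (hT.diff hS)
      (hf.mono_set hST) (hf.mono_set Set.diff_subset)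
    rwa [Set.union_diff_cancel hST] at h2
  rw [hsplit, le_add_iff_nonneg_right]
  haveI : IsFiniteMeasure (volume.restrict (T \ S)) :=
    ⟨by rw [Measure.restrict_apply_univ]; exact lt_of_le_of_lt (measure_mono Set.diff_subset) (lt_top_iff_ne_top.2 hTfin)⟩
  refine aux_integral_nonneg (hf.mono_set Set.diff_subset) ?_
  exact (ae_restrict_iff' (hT.diff hS)).2 (Filter.Eventually.of_forall fun x hx => h x hx.1)

lemma aux_sq_add {a b : A} :
    star (a + b) * (a + b) ≤ (2:ℝ) • (star a * a) + (2:ℝ) • (star b * b) := by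
  have key : star (a + b) * (a + b) + star (a - b) * (a - b)
      = (2:ℝ) • (star a * a) + (2:ℝ) • (star b * b) := by
    simp only [two_smul ℝ, star_add, star_sub, add_mul, mul_add, sub_mul, mul_sub]
    abel
  have h := star_mul_self_nonneg (a - b)
  calc star (a + b) * (a + b)
      = ((2:ℝ) • (star a * a) + (2:ℝ) • (star b * b)) - star (a - b) * (a - b) := by
        rw [← key]; abel
    _ ≤ _ := sub_le_self _ h

end Aux

section CS
variable {A : Type*} [NormedRing A] [StarRing A] [CStarRing A] [CompleteSpace A]
    [NormedAlgebra ℂ A] [StarModule ℂ A] [PartialOrder A] [StarOrderedRing A]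

lemma aux_integral_star {X : Type*} [MeasurableSpace X] {μ : Measure X} {g : X → A}
    (hg : Integrable g μ) : ∫ x, star (g x) ∂μ = star (∫ x, g x ∂μ) :=
  ContinuousLinearMap.integral_comp_comm ((starL' ℝ : A ≃L[ℝ] A).toContinuousLinearMap) hg

lemma aux_cs {a b : ℝ} (hab : a ≤ b) {g : ℝ → A} (hg : ContinuousOn g (Set.Icc a b)) :
    star (∫ u in Set.Icc a b, g u) * (∫ u in Set.Icc a b, g u)
      ≤ (b - a) • ∫ u in Set.Icc a b, star (g u) * g u := by
  rcases eq_or_lt_of_le hab with rfl | hab'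
  · have h0 : volume.restrict (Set.Icc a a) = 0 := by
      rw [Measure.restrict_eq_zero]; simp
    rw [h0]; simp
  set μ := volume.restrict (Set.Icc a b) with hμdef
  haveI : IsFiniteMeasure μ := ⟨by
    simp [hμdef, Measure.restrict_apply_univ, Real.volume_Icc, ENNReal.ofReal_lt_top]⟩
  set c : ℝ := b - a with hc
  have hc0 : 0 < c := sub_pos.2 hab'
  have hK : IsCompact (Set.Icc a b) := isCompact_Icc
  have hgi : Integrable g μ := hg.integrableOn_compact hK
  have hgstar : Integrable (fun u => star (g u)) μ := (hg.star).integrableOn_compact hK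
  set Ig : A := ∫ u, g u ∂μ with hIg
  set I1 : A := ∫ u, star (g u) * g u ∂μ with hI1
  set P : A := star Ig * Ig with hP
  set m : A := c⁻¹ • Ig with hm
  have hint1 : Integrable (fun u => star (g u) * g u) μ :=
    ((hg.star.mul hg)).integrableOn_compact hK
  have hint2 : Integrable (fun u => star (g u) * m) μ :=
    ((hg.star.mul continuousOn_const)).integrableOn_compact hK
  have hint3 : Integrable (fun u => star m * g u) μ :=
    ((continuousOn_const.mul hg)).integrableOn_compact hK
  have hint4 : Integrable (fun _ : ℝ => star m * m) μ := integrable_const _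
  have h2 : ∫ u, star (g u) * m ∂μ = star Ig * m := by
    have := ContinuousLinearMap.integral_comp_comm ((ContinuousLinearMap.mul ℝ A).flip m) hgstar
    simpa [ContinuousLinearMap.flip_apply, ContinuousLinearMap.mul_apply',
      aux_integral_star hgi] using this
  have h3 : ∫ u, star m * g u ∂μ = star m * Ig := by
    have := ContinuousLinearMap.integral_comp_comm (ContinuousLinearMap.mul ℝ A (star m)) hgi
    simpa [ContinuousLinearMap.mul_apply'] using this
  have h4 : ∫ _ : ℝ, (star m * m : A) ∂μ = c • (star m * m) := by
    rw [integral_const]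
    congr 1
    simp [hμdef, Measure.restrict_apply_univ, Real.volume_Icc,
      ENNReal.toReal_ofReal hc0.le]
    exact max_eq_left hc0.le
  have hptwise : ∀ u, star (g u - m) * (g u - m)
      = (star (g u) * g u - star (g u) * m) - (star m * g u - star m * m) := fun u => by
    simp only [star_sub, sub_mul, mul_sub]; abel
  have hint12 : Integrable (fun u => star (g u) * g u - star (g u) * m) μ := hint1.sub hint2
  have hint34 : Integrable (fun u => star m * g u - star m * m) μ := hint3.sub hint4
  have hT : ∫ u, star (g u - m) * (g u - m) ∂μ
      = (I1 - star Ig * m) - (star m * Ig - c • (star m * m)) := by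
    simp only [hptwise]
    rw [integral_sub hint12 hint34, integral_sub hint1 hint2, integral_sub hint3 hint4,
      h2, h3, h4, hI1]
  have hsm : star Ig * m = c⁻¹ • P := by rw [hm, mul_smul_comm, hP]
  have hms : star m * Ig = c⁻¹ • P := by rw [hm, star_smul, star_trivial, smul_mul_assoc, hP]
  have hmm' : c • (star m * m) = c⁻¹ • P := by
    rw [hm, star_smul, star_trivial, smul_mul_assoc, mul_smul_comm, smul_smul, smul_smul, hP]
    congr 1
    field_simp
  have hintT : Integrable (fun u => star (g u - m) * (g u - m)) μ :=
    (((hg.sub continuousOn_const).star.mul (hg.sub continuousOn_const))).integrableOn_compact hK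
  have h0 : 0 ≤ ∫ u, star (g u - m) * (g u - m) ∂μ :=
    aux_integral_nonneg hintT (Filter.Eventually.of_forall fun u => star_mul_self_nonneg _)
  rw [hT, hsm, hms, hmm'] at h0
  have h5 : c⁻¹ • P ≤ I1 := by
    rw [← sub_nonneg]
    calc (0:A) ≤ (I1 - c⁻¹ • P) - (c⁻¹ • P - c⁻¹ • P) := h0
      _ = I1 - c⁻¹ • P := by abel
  calc P = c • (c⁻¹ • P) := by rw [smul_smul, mul_inv_cancel₀ hc0.ne', one_smul]
    _ ≤ c • I1 := aux_smul_mono hc0.le h5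

end CS

section Main
variable {A : Type*} [NormedRing A] [StarRing A] [CStarRing A] [CompleteSpace A]
    [NormedAlgebra ℂ A] [StarModule ℂ A] [PartialOrder A] [StarOrderedRing A]

lemma aux_smul_mono_right {r r' : ℝ} (h : r ≤ r') {x : A} (hx : 0 ≤ x) :
    r • x ≤ r' • x := by
  have := smul_nonneg (sub_nonneg.2 h) hx
  rwa [sub_smul, sub_nonneg] at this

lemma aux_bound {α β σ τ : ℝ} (hαβ : α ≤ β) (hστ : σ ≤ τ)
    (hsub : Set.Icc σ τ ⊆ Set.Icc α β) {F' : ℝ → A}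
    (hcont : ContinuousOn F' (Set.Icc α β)) :
    star (∫ u in σ..τ, F' u) * (∫ u in σ..τ, F' u)
      ≤ (τ - σ) • ∫ s in Set.Icc α β, star (F' s) * F' s := by
  have h1 : ∫ u in σ..τ, F' u = ∫ u in Set.Icc σ τ, F' u := by
    rw [intervalIntegral.integral_of_le hστ, ← integral_Icc_eq_integral_Ioc]
  rw [h1]
  calc star (∫ u in Set.Icc σ τ, F' u) * (∫ u in Set.Icc σ τ, F' u)
      ≤ (τ - σ) • ∫ u in Set.Icc σ τ, star (F' u) * F' u := aux_cs hστ (hcont.mono hsub)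
    _ ≤ (τ - σ) • ∫ s in Set.Icc α β, star (F' s) * F' s := by
        refine aux_smul_mono (by linarith) ?_
        refine aux_setIntegral_mono_set measurableSet_Icc measurableSet_Icc hsub ?_ ?_ ?_
        · simp [Real.volume_Icc]
        · exact (hcont.star.mul hcont).integrableOn_compact isCompact_Icc
        · exact fun x _ => star_mul_self_nonneg _

end Main

theorem stmt0 {A : Type*} [NormedRing A] [StarRing A] [CStarRing A] [CompleteSpace A]
    [NormedAlgebra ℂ A] [StarModule ℂ A] [PartialOrder A] [StarOrderedRing A]
    (α β : ℝ) (hαβ : α < β) (F F' : ℝ → A)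
    (hderiv : ∀ t ∈ Set.Icc α β, HasDerivWithinAt F (F' t) (Set.Icc α β) t)
    (hcont : ContinuousOn F' (Set.Icc α β))
    (ℓ : ℝ) (hℓ0 : 0 < ℓ) (hℓ : ℓ ≤ β - α) (t : ℝ) (ht : t ∈ Set.Icc α β) :
    star (F t) * F t ≤
      (2 / ℓ) • (∫ s in Set.Icc α β, star (F s) * F s) +
        (2 * ℓ) • (∫ s in Set.Icc α β, star (F' s) * F' s) := by
  obtain ⟨ht1, ht2⟩ := ht
  set I : Set ℝ := Set.Icc α β with hI
  set C1 : A := ∫ s in I, star (F s) * F s with hC1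
  set C2 : A := ∫ s in I, star (F' s) * F' s with hC2
  set a : ℝ := max α (t - ℓ) with ha
  set J : Set ℝ := Set.Icc a (a + ℓ) with hJ
  have ha1 : α ≤ a := le_max_left _ _
  have ha2 : a + ℓ ≤ β := by
    have h : a ≤ β - ℓ := max_le (by linarith) (by linarith)
    linarith
  have htJ1 : a ≤ t := max_le ht1 (by linarith)
  have htJ2 : t ≤ a + ℓ := by
    have := le_max_right α (t - ℓ); linarith
  have hJI : J ⊆ I := Set.Icc_subset_Icc ha1 ha2
  have hFc : ContinuousOn F I := fun x hx => (hderiv x hx).continuousWithinAt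
  haveI : IsFiniteMeasure (volume.restrict I) :=
    ⟨by simp [hI, Measure.restrict_apply_univ, Real.volume_Icc, ENNReal.ofReal_lt_top]⟩
  haveI : IsFiniteMeasure (volume.restrict J) :=
    ⟨by simp [hJ, Measure.restrict_apply_univ, Real.volume_Icc, ENNReal.ofReal_lt_top]⟩
  have hF'F'int : IntegrableOn (fun s => star (F' s) * F' s) I :=
    (hcont.star.mul hcont).integrableOn_compact isCompact_Icc
  have hFFint : IntegrableOn (fun s => star (F s) * F s) I :=
    (hFc.star.mul hFc).integrableOn_compact isCompact_Icc
  have hC2nonneg : 0 ≤ C2 :=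
    aux_integral_nonneg hF'F'int
      ((ae_restrict_iff' measurableSet_Icc).2
        (Filter.Eventually.of_forall fun x _ => star_mul_self_nonneg _))
  -- FTC
  have hFTC : ∀ σ ∈ I, ∀ τ ∈ I, σ ≤ τ → ∫ u in σ..τ, F' u = F τ - F σ := by
    intro σ hσ τ hτ hστ
    have hsub : Set.Icc σ τ ⊆ I := Set.Icc_subset_Icc hσ.1 hτ.2
    refine intervalIntegral.integral_eq_sub_of_hasDeriv_right_of_le hστ
      (hFc.mono hsub) (fun x hx => ?_) ?_
    · refine (hderiv x (hsub ⟨hx.1.le, hx.2.le⟩)).mono_of_mem_nhdsWithin ?_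
      exact Icc_mem_nhdsGT_of_mem ⟨hσ.1.trans hx.1.le, lt_of_lt_of_le hx.2 hτ.2⟩
    · exact (hcont.mono (by rwa [Set.uIcc_of_le hστ])).intervalIntegrable
  -- pointwise bound
  have key : ∀ s ∈ J, star (F t) * F t
      ≤ (2:ℝ) • (star (F s) * F s) + (2:ℝ) • (ℓ • C2) := by
    intro s hs
    have hsI : s ∈ I := hJI hs
    set G : A := ∫ u in s..t, F' u with hG
    have hFt : F t = F s + G := by
      rcases le_total s t with h | h
      · rw [hG, hFTC s hsI t ⟨ht1, ht2⟩ h]; abel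
      · rw [hG, intervalIntegral.integral_symm, hFTC t ⟨ht1, ht2⟩ s hsI h]; abel
    have hGbound : star G * G ≤ ℓ • C2 := by
      rcases le_total s t with h | h
      · calc star G * G ≤ (t - s) • C2 :=
              aux_bound (le_of_lt hαβ) h (Set.Icc_subset_Icc hsI.1 ht2) hcont
          _ ≤ ℓ • C2 := aux_smul_mono_right (by
              have := hs.1; have := hs.2; linarith) hC2nonneg
      · have hGneg : G = -∫ u in t..s, F' u := by
          rw [hG, intervalIntegral.integral_symm]
        calc star G * G = star (∫ u in t..s, F' u) * (∫ u in t..s, F' u) := by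
              rw [hGneg, star_neg, neg_mul_neg]
          _ ≤ (s - t) • C2 :=
              aux_bound (le_of_lt hαβ) h (Set.Icc_subset_Icc ht1 hsI.2) hcont
          _ ≤ ℓ • C2 := aux_smul_mono_right (by
              have := hs.1; have := hs.2; linarith) hC2nonneg
    calc star (F t) * F t = star (F s + G) * (F s + G) := by rw [← hFt]
      _ ≤ (2:ℝ) • (star (F s) * F s) + (2:ℝ) • (star G * G) := aux_sq_add
      _ ≤ (2:ℝ) • (star (F s) * F s) + (2:ℝ) • (ℓ • C2) :=
          add_le_add le_rfl (aux_smul_mono (by norm_num) hGbound)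
  -- integrate over J
  have hintL : Integrable (fun _ : ℝ => star (F t) * F t) (volume.restrict J) :=
    integrable_const _
  have hintR1 : Integrable (fun s => (2:ℝ) • (star (F s) * F s)) (volume.restrict J) :=
    (((hFc.mono hJI).star.mul (hFc.mono hJI)).integrableOn_compact isCompact_Icc).smul _
  have hintR : Integrable (fun s => (2:ℝ) • (star (F s) * F s) + (2:ℝ) • (ℓ • C2))
      (volume.restrict J) := hintR1.add (integrable_const _)
  have hmono := aux_integral_mono hintL hintR
    ((ae_restrict_iff' measurableSet_Icc).2 (Filter.Eventually.of_forall key))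
  have hvolJ : (volume J).toReal = ℓ := by
    simp [hJ, Real.volume_Icc, ENNReal.toReal_ofReal hℓ0.le]
  rw [setIntegral_const, measureReal_def, hvolJ] at hmono
  rw [integral_add hintR1 (integrable_const _), integral_smul, setIntegral_const, measureReal_def, hvolJ]
    at hmono
  have hJle : ∫ s in J, star (F s) * F s ≤ C1 := by
    refine aux_setIntegral_mono_set measurableSet_Icc measurableSet_Icc hJI ?_ hFFint ?_
    · simp [hI, Real.volume_Icc]
    · exact fun x _ => star_mul_self_nonneg _
  have hstep : ℓ • (star (F t) * F t)
      ≤ (2:ℝ) • C1 + ℓ • ((2:ℝ) • (ℓ • C2)) :=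
    le_trans hmono (add_le_add (aux_smul_mono (by norm_num) hJle) le_rfl)
  have final := aux_smul_mono (inv_nonneg.2 hℓ0.le) hstep
  rw [smul_smul, inv_mul_cancel₀ hℓ0.ne', one_smul, smul_add, smul_smul, smul_smul,
    smul_smul, smul_smul] at final
  have e1 : (2 / ℓ : ℝ) = ℓ⁻¹ * 2 := div_eq_inv_mul 2 ℓ
  have e2 : (ℓ⁻¹ * ℓ * 2 * ℓ : ℝ) = 2 * ℓ := by
    rw [inv_mul_cancel₀ hℓ0.ne', one_mul]
  rw [e1, ← e2]
  exact final
end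

section
/- Let δ > 0, 0 < δ' < δ, γ ∈ ℝ, k ∈ ℕ, η > 0 and r ∈ ℝ. Then ψ_k^{δ+iγ}(√η · r) = (Γ(δ+iγ+1)/(Γ(δ−δ'+iγ)·Γ(δ'+1))) · ∫_0^1 s^{δ'} (1−s)^{δ−δ'+iγ−1} e^{(1/4)·η·r²·(s−1)} ψ_k^{δ'}(√(ηs) · r) ds. -/
open MeasureTheory

/-- The generalized Laguerre polynomial `L_k^a(x)` with complex parameter `a`. -/
noncomputable def genLaguerre (k : ℕ) (a : ℂ) (x : ℂ) : ℂ :=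
  ∑ i ∈ Finset.range (k + 1),
    (-1 : ℂ) ^ i * (Complex.Gamma ((k : ℂ) + a + 1) /
      (Complex.Gamma ((i : ℂ) + a + 1) * (Nat.factorial (k - i) : ℂ) * (Nat.factorial i : ℂ)))
      * x ^ i

/-- The normalized Laguerre function `ψ_k^a(r)`. -/
noncomputable def psiLag (k : ℕ) (a : ℂ) (r : ℝ) : ℂ :=
  (Complex.Gamma ((k : ℂ) + 1) * Complex.Gamma (a + 1) / Complex.Gamma ((k : ℂ) + a + 1)) *
    genLaguerre k a ((r : ℂ) ^ 2 / 2) * Complex.exp (-(r : ℂ) ^ 2 / 4)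

/-- Split `s ^ (u + i)` for nonnegative real `s`. -/
lemma cpow_split (s : ℝ) (hs : 0 ≤ s) (u : ℂ) (hu : 0 < u.re) (i : ℕ) :
    (s : ℂ) ^ (u + (i : ℂ)) = (s : ℂ) ^ u * (s : ℂ) ^ i := by
  rcases hs.eq_or_lt with h | h
  · have h0 : (s : ℂ) = 0 := by exact_mod_cast h.symm
    have hu0 : u ≠ 0 := fun h => by simp [h] at hu
    have hui : u + (i : ℂ) ≠ 0 := by
      intro hcon
      have : (u + (i : ℂ)).re = 0 := by rw [hcon]; simp
      simp only [Complex.add_re, Complex.natCast_re] at this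
      have : (0:ℝ) ≤ (i:ℝ) := by positivity
      linarith [hu, ‹(u.re + (i:ℝ)) = 0›]
    rw [h0, Complex.zero_cpow hui, Complex.zero_cpow hu0, zero_mul]
  · have hsne : (s : ℂ) ≠ 0 := by exact_mod_cast h.ne'
    rw [Complex.cpow_add _ _ hsne, Complex.cpow_natCast]

lemma coeff_id (i : ℕ) (Gka Gia Gb Gkb Gib Gab Gk G1a E X f1 f2 : ℂ)
    (h1 : Gka ≠ 0) (h2 : Gia ≠ 0) (h3 : Gab ≠ 0) (h4 : Gb ≠ 0) (h5 : Gkb ≠ 0)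
    (h6 : Gib ≠ 0) (hf1 : f1 ≠ 0) (hf2 : f2 ≠ 0) :
    Gk * G1a / Gka * ((-1:ℂ)^i * (Gka / (Gia * f1 * f2)) * X^i) * E
      = G1a / (Gab * Gb) * (E * (Gk * Gb / Gkb) * ((-1:ℂ)^i * (Gkb / (Gib * f1 * f2))) * X^i *
        (Gib * Gab / Gia)) := by
  have key : (Gb * Gb⁻¹) * (Gkb * Gkb⁻¹) * (Gib * Gib⁻¹) * (Gab * Gab⁻¹) * (Gia * Gia⁻¹)
      * (f1 * f1⁻¹) * (f2 * f2⁻¹) = 1 := by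
    rw [mul_inv_cancel₀ h4, mul_inv_cancel₀ h5, mul_inv_cancel₀ h6, mul_inv_cancel₀ h3,
      mul_inv_cancel₀ h2, mul_inv_cancel₀ hf1, mul_inv_cancel₀ hf2]
    norm_num
  field_simp
set_option maxHeartbeats 2000000 in

theorem stmt6 (δ δ' γ : ℝ) (hδ : 0 < δ) (hδ'0 : 0 < δ') (hδ' : δ' < δ)
    (k : ℕ) (η : ℝ) (hη : 0 < η) (r : ℝ) :
    psiLag k ((δ : ℂ) + (γ : ℂ) * Complex.I) (Real.sqrt η * r) =
      (Complex.Gamma ((δ : ℂ) + (γ : ℂ) * Complex.I + 1) /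
        (Complex.Gamma ((δ : ℂ) - (δ' : ℂ) + (γ : ℂ) * Complex.I) *
          Complex.Gamma ((δ' : ℂ) + 1))) *
      ∫ s in (0 : ℝ)..1,
        (s : ℂ) ^ (δ' : ℂ) * (1 - (s : ℂ)) ^ ((δ : ℂ) - (δ' : ℂ) + (γ : ℂ) * Complex.I - 1) *
          Complex.exp ((1 / 4 : ℂ) * (η : ℂ) * (r : ℂ) ^ 2 * ((s : ℂ) - 1)) *
          psiLag k (δ' : ℂ) (Real.sqrt (η * s) * r) := by
  set a : ℂ := (δ : ℂ) + (γ : ℂ) * Complex.I with ha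
  set b : ℂ := (δ' : ℂ) with hb
  have hare : a.re = δ := by simp [ha]
  have hbre : b.re = δ' := by simp [hb]
  have habre : (a - b).re = δ - δ' := by simp [ha, hb]
  -- the exponent in the statement
  have hab1 : (δ : ℂ) - b + (γ : ℂ) * Complex.I - 1 = (a - b) - 1 := by
    rw [ha, hb]; ring
  have hab0 : (δ : ℂ) - b + (γ : ℂ) * Complex.I = a - b := by rw [ha, hb]; ring
  clear_value a b
  rw [hab1, hab0]
  -- squares of the scaled arguments
  have hsq : ((Real.sqrt η * r : ℝ) : ℂ) ^ 2 = (η : ℂ) * (r : ℂ) ^ 2 := by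
    have : (Real.sqrt η * r) ^ 2 = η * r ^ 2 := by
      rw [mul_pow, Real.sq_sqrt hη.le]
    calc ((Real.sqrt η * r : ℝ) : ℂ) ^ 2 = (((Real.sqrt η * r) ^ 2 : ℝ) : ℂ) := by push_cast; ring
      _ = (η : ℂ) * (r : ℂ) ^ 2 := by rw [this]; push_cast; ring
  -- coefficients
  set X : ℂ := (η : ℂ) * (r : ℂ) ^ 2 / 2 with hX
  set E : ℂ := Complex.exp (-((η : ℂ) * (r : ℂ) ^ 2) / 4) with hE
  set Ca : ℂ := Complex.Gamma ((k : ℂ) + 1) * Complex.Gamma (a + 1) / Complex.Gamma ((k : ℂ) + a + 1) with hCa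
  set Cb : ℂ := Complex.Gamma ((k : ℂ) + 1) * Complex.Gamma (b + 1) / Complex.Gamma ((k : ℂ) + b + 1) with hCb
  set Aa : ℕ → ℂ := fun i => (-1 : ℂ) ^ i * (Complex.Gamma ((k : ℂ) + a + 1) /
      (Complex.Gamma ((i : ℂ) + a + 1) * (Nat.factorial (k - i) : ℂ) * (Nat.factorial i : ℂ))) with hAa
  set Ab : ℕ → ℂ := fun i => (-1 : ℂ) ^ i * (Complex.Gamma ((k : ℂ) + b + 1) /
      (Complex.Gamma ((i : ℂ) + b + 1) * (Nat.factorial (k - i) : ℂ) * (Nat.factorial i : ℂ))) with hAb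
  set F : ℕ → ℂ := fun i => E * Cb * Ab i * X ^ i with hF
  -- positivity of real parts
  have hbire : ∀ i : ℕ, 0 < (b + (i : ℂ) + 1).re := by
    intro i
    simp only [Complex.add_re, Complex.natCast_re, Complex.one_re, hbre]
    positivity
  have habre' : 0 < (a - b).re := by rw [habre]; linarith
  -- key: the integral equals a finite sum of beta integrals
  have key : (∫ s in (0 : ℝ)..1,
        (s : ℂ) ^ b * (1 - (s : ℂ)) ^ ((a - b) - 1) *
          Complex.exp ((1 / 4 : ℂ) * (η : ℂ) * (r : ℂ) ^ 2 * ((s : ℂ) - 1)) *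
          psiLag k b (Real.sqrt (η * s) * r))
      = ∑ i ∈ Finset.range (k + 1), F i * Complex.betaIntegral (b + (i : ℂ) + 1) (a - b) := by
    have hcongr : ∀ s ∈ Set.uIcc (0 : ℝ) 1,
        (s : ℂ) ^ b * (1 - (s : ℂ)) ^ ((a - b) - 1) *
          Complex.exp ((1 / 4 : ℂ) * (η : ℂ) * (r : ℂ) ^ 2 * ((s : ℂ) - 1)) *
          psiLag k b (Real.sqrt (η * s) * r)
        = ∑ i ∈ Finset.range (k + 1),
            F i * ((s : ℂ) ^ (b + (i : ℂ) + 1 - 1) * (1 - (s : ℂ)) ^ ((a - b) - 1)) := by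
      intro s hs
      rw [Set.uIcc_of_le (by norm_num : (0:ℝ) ≤ 1)] at hs
      obtain ⟨hs0, hs1⟩ := hs
      have hsq2 : ((Real.sqrt (η * s) * r : ℝ) : ℂ) ^ 2 = (η : ℂ) * (s : ℂ) * (r : ℂ) ^ 2 := by
        have h2 : (Real.sqrt (η * s) * r) ^ 2 = η * s * r ^ 2 := by
          rw [mul_pow, Real.sq_sqrt (by positivity)]
        calc ((Real.sqrt (η * s) * r : ℝ) : ℂ) ^ 2
            = (((Real.sqrt (η * s) * r) ^ 2 : ℝ) : ℂ) := by push_cast; ring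
          _ = (η : ℂ) * (s : ℂ) * (r : ℂ) ^ 2 := by rw [h2]; push_cast; ring
      rw [psiLag, genLaguerre, hsq2, ← hCb]
      simp only [hF, hAb]
      simp only [Finset.mul_sum, Finset.sum_mul]
      refine Finset.sum_congr rfl fun i _ => ?_
      have e1 : Complex.exp ((1 / 4 : ℂ) * (η : ℂ) * (r : ℂ) ^ 2 * ((s : ℂ) - 1)) *
          Complex.exp (-((η : ℂ) * (s : ℂ) * (r : ℂ) ^ 2) / 4) = E := by
        rw [hE, ← Complex.exp_add]; congr 1; ring
      have e2 : ((η : ℂ) * (s : ℂ) * (r : ℂ) ^ 2 / 2) ^ i = X ^ i * (s : ℂ) ^ i := by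
        rw [hX, show (η : ℂ) * (s : ℂ) * (r : ℂ) ^ 2 / 2 = ((η : ℂ) * (r : ℂ) ^ 2 / 2) * s from by ring,
          mul_pow]
      have e3 : (s : ℂ) ^ (b + (i : ℂ) + 1 - 1) = (s : ℂ) ^ b * (s : ℂ) ^ i := by
        rw [show b + (i : ℂ) + 1 - 1 = b + (i : ℂ) from by ring,
          cpow_split s hs0 b (by rw [hbre]; exact hδ'0) i]
      rw [e2, e3, ← e1]
      ring
    rw [intervalIntegral.integral_congr hcongr]
    rw [intervalIntegral.integral_finset_sum]
    · refine Finset.sum_congr rfl fun i _ => ?_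
      rw [intervalIntegral.integral_const_mul, Complex.betaIntegral]
    · intro i _
      exact (Complex.betaIntegral_convergent (hbire i) habre').const_mul (F i)
  rw [key]
  -- evaluate the beta integrals
  have hbeta : ∀ i : ℕ, Complex.betaIntegral (b + (i : ℂ) + 1) (a - b)
      = Complex.Gamma (b + (i : ℂ) + 1) * Complex.Gamma (a - b) / Complex.Gamma (a + (i : ℂ) + 1) := by
    intro i
    have h := Complex.Gamma_mul_Gamma_eq_betaIntegral (hbire i) habre'
    have harg : b + (i : ℂ) + 1 + (a - b) = a + (i : ℂ) + 1 := by ring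
    rw [harg] at h
    have hne : Complex.Gamma (a + (i : ℂ) + 1) ≠ 0 := by
      apply Complex.Gamma_ne_zero_of_re_pos
      simp only [Complex.add_re, Complex.natCast_re, Complex.one_re, hare]
      positivity
    rw [eq_div_iff hne, h]; ring
  -- rewrite beta values inside the sum
  simp only [hbeta]
  -- expand the left-hand side
  rw [psiLag, genLaguerre, hsq, ← hCa, ← hE]
  simp only [hF, hAa, hAb, hCa, hCb]
  simp only [Finset.mul_sum, Finset.sum_mul]
  refine Finset.sum_congr rfl fun i hi => ?_
  -- the per-coefficient Gamma identity
  have harg1 : b + (i : ℂ) + 1 = (i : ℂ) + b + 1 := by ring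
  have harg2 : a + (i : ℂ) + 1 = (i : ℂ) + a + 1 := by ring
  rw [harg1, harg2]
  have hΓ1 : Complex.Gamma ((k : ℂ) + a + 1) ≠ 0 := by
    apply Complex.Gamma_ne_zero_of_re_pos
    simp only [Complex.add_re, Complex.natCast_re, Complex.one_re, hare]; positivity
  have hΓ2 : Complex.Gamma ((i : ℂ) + a + 1) ≠ 0 := by
    apply Complex.Gamma_ne_zero_of_re_pos
    simp only [Complex.add_re, Complex.natCast_re, Complex.one_re, hare]; positivity
  have hΓ3 : Complex.Gamma (a - b) ≠ 0 := Complex.Gamma_ne_zero_of_re_pos habre'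
  have hΓ4 : Complex.Gamma (b + 1) ≠ 0 := by
    apply Complex.Gamma_ne_zero_of_re_pos
    simp only [Complex.add_re, Complex.one_re, hbre]; positivity
  have hΓ5 : Complex.Gamma ((k : ℂ) + b + 1) ≠ 0 := by
    apply Complex.Gamma_ne_zero_of_re_pos
    simp only [Complex.add_re, Complex.natCast_re, Complex.one_re, hbre]; positivity
  have hΓ6 : Complex.Gamma ((i : ℂ) + b + 1) ≠ 0 := by
    apply Complex.Gamma_ne_zero_of_re_pos
    simp only [Complex.add_re, Complex.natCast_re, Complex.one_re, hbre]; positivity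
  have hf1 : ((Nat.factorial (k - i) : ℂ)) ≠ 0 := by
    exact_mod_cast Nat.cast_ne_zero.mpr (Nat.factorial_ne_zero _)
  have hf2 : ((Nat.factorial i : ℂ)) ≠ 0 := by
    exact_mod_cast Nat.cast_ne_zero.mpr (Nat.factorial_ne_zero _)
  rw [hX]
  exact coeff_id i _ _ _ _ _ _ _ _ _ _ _ _ hΓ1 hΓ2 hΓ3 hΓ4 hΓ5 hΓ6 hf1 hf2
end

section
/- Let a, b be complex numbers with Re(a−b) > 0 and Re(b) > −1, let k ∈ ℕ and r ∈ ℝ. Then L_k^a(r) = (Γ(k+a+1)/(Γ(a−b)·Γ(k+b+1))) · ∫_0^1 s^b (1−s)^{a−b−1} L_k^b(r·s) ds. -/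
open MeasureTheory

lemma auxEq (a b : ℂ) (r : ℝ) (i : ℕ) :
    ∀ᵐ s : ℝ, (s : ℂ) ^ b * (1 - (s : ℂ)) ^ (a - b - 1) * ((r : ℂ) * s) ^ i
      = ((r : ℂ) ^ i) • ((s : ℂ) ^ (b + i + 1 - 1) * (1 - (s : ℂ)) ^ (a - b - 1)) := by
  have hae : ∀ᵐ s : ℝ, s ≠ 0 := by
    rw [ae_iff]
    simpa [Set.setOf_eq_eq_singleton'] using measure_singleton (0 : ℝ)
  filter_upwards [hae] with s hs
  have hs0 : (s : ℂ) ≠ 0 := by exact_mod_cast hs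
  have h1 : (b + (i : ℂ) + 1 - 1) = b + (i : ℂ) := by ring
  rw [h1, smul_eq_mul, Complex.cpow_add _ _ hs0, Complex.cpow_natCast, mul_pow]
  ring

lemma auxInt (a b : ℂ) (hab : 0 < (a - b).re) (hb : -1 < b.re) (r : ℝ) (i : ℕ) :
    ∫ s in (0 : ℝ)..1, (s : ℂ) ^ b * (1 - (s : ℂ)) ^ (a - b - 1) * ((r : ℂ) * s) ^ i
      = (r : ℂ) ^ i * Complex.betaIntegral (b + i + 1) (a - b) := by
  rw [Complex.betaIntegral, ← smul_eq_mul, ← intervalIntegral.integral_smul]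
  refine intervalIntegral.integral_congr_ae ?_
  filter_upwards [auxEq a b r i] with s hs _
  exact hs

lemma auxIntble (a b : ℂ) (hab : 0 < (a - b).re) (hb : -1 < b.re) (r : ℝ) (i : ℕ) (c : ℂ) :
    IntervalIntegrable
      (fun s : ℝ => (s : ℂ) ^ b * (1 - (s : ℂ)) ^ (a - b - 1) * (c * ((r : ℂ) * s) ^ i))
      volume 0 1 := by
  have hre : 0 < (b + i + 1).re := by
    simp only [Complex.add_re, Complex.natCast_re, Complex.one_re]
    push_cast
    linarith [Nat.cast_nonneg (α := ℝ) i]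
  have h := ((Complex.betaIntegral_convergent hre hab).smul ((r : ℂ) ^ i)).const_mul c
  refine h.congr_ae ?_
  filter_upwards [ae_restrict_of_ae (auxEq a b r i)] with s hs
  simp only [Pi.smul_apply, smul_eq_mul] at hs ⊢
  rw [← hs]
  ring

theorem stmt7 (a b : ℂ) (hab : 0 < (a - b).re) (hb : -1 < b.re) (k : ℕ) (r : ℝ) :
    genLaguerre k a (r : ℂ) =
      (Complex.Gamma ((k : ℂ) + a + 1) /
          (Complex.Gamma (a - b) * Complex.Gamma ((k : ℂ) + b + 1))) *
        ∫ s in (0 : ℝ)..1,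
          (s : ℂ) ^ b * (1 - (s : ℂ)) ^ (a - b - 1) * genLaguerre k b ((r : ℂ) * (s : ℂ)) := by
  have hgab : Complex.Gamma (a - b) ≠ 0 := Complex.Gamma_ne_zero_of_re_pos hab
  have hposb : ∀ i : ℕ, 0 < ((i : ℂ) + b + 1).re := fun i => by
    simp only [Complex.add_re, Complex.natCast_re, Complex.one_re]
    push_cast
    linarith [Nat.cast_nonneg (α := ℝ) i]
  have hposa : ∀ i : ℕ, 0 < ((i : ℂ) + a + 1).re := fun i => by
    have := hposb i
    simp only [Complex.add_re, Complex.sub_re] at *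
    linarith
  simp only [genLaguerre, Finset.mul_sum]
  rw [intervalIntegral.integral_finset_sum (fun i _ => by
    have := auxIntble a b hab hb r i
      ((-1 : ℂ) ^ i * (Complex.Gamma ((k : ℂ) + b + 1) /
        (Complex.Gamma ((i : ℂ) + b + 1) * (Nat.factorial (k - i) : ℂ)
          * (Nat.factorial i : ℂ))))
    refine this.congr_ae ?_
    filter_upwards with s
    ring), Finset.mul_sum]
  refine Finset.sum_congr rfl fun i hi => ?_
  have heq : (∫ s in (0 : ℝ)..1, (s : ℂ) ^ b * (1 - (s : ℂ)) ^ (a - b - 1) *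
      ((-1 : ℂ) ^ i * (Complex.Gamma ((k : ℂ) + b + 1) /
        (Complex.Gamma ((i : ℂ) + b + 1) * (Nat.factorial (k - i) : ℂ)
          * (Nat.factorial i : ℂ))) * ((r : ℂ) * s) ^ i))
      = ((-1 : ℂ) ^ i * (Complex.Gamma ((k : ℂ) + b + 1) /
        (Complex.Gamma ((i : ℂ) + b + 1) * (Nat.factorial (k - i) : ℂ)
          * (Nat.factorial i : ℂ)))) *
        ((r : ℂ) ^ i * Complex.betaIntegral (b + i + 1) (a - b)) := by
    rw [← auxInt a b hab hb r i, ← intervalIntegral.integral_const_mul]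
    congr 1
    funext s
    ring
  rw [heq]
  have hgb : Complex.Gamma ((i : ℂ) + b + 1) ≠ 0 :=
    Complex.Gamma_ne_zero_of_re_pos (hposb i)
  have hga : Complex.Gamma ((i : ℂ) + a + 1) ≠ 0 :=
    Complex.Gamma_ne_zero_of_re_pos (hposa i)
  have hgkb : Complex.Gamma ((k : ℂ) + b + 1) ≠ 0 :=
    Complex.Gamma_ne_zero_of_re_pos (hposb k)
  have hbeta : Complex.betaIntegral (b + i + 1) (a - b)
      = Complex.Gamma ((i : ℂ) + b + 1) * Complex.Gamma (a - b) /
          Complex.Gamma ((i : ℂ) + a + 1) := by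
    have hs : 0 < (b + (i : ℂ) + 1).re := by
      have := hposb i
      simp only [Complex.add_re] at *
      linarith
    have h := Complex.Gamma_mul_Gamma_eq_betaIntegral hs hab
    rw [show b + (i : ℂ) + 1 + (a - b) = (i : ℂ) + a + 1 by ring] at h
    rw [eq_div_iff hga, mul_comm, ← h,
      show b + (i : ℂ) + 1 = (i : ℂ) + b + 1 by ring]
  rw [hbeta]
  set Gka := Complex.Gamma ((k : ℂ) + a + 1)
  set Gkb := Complex.Gamma ((k : ℂ) + b + 1)
  set Gia := Complex.Gamma ((i : ℂ) + a + 1)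
  set Gib := Complex.Gamma ((i : ℂ) + b + 1)
  set Gab := Complex.Gamma (a - b)
  have hf1 : ((k - i).factorial : ℂ) ≠ 0 := Nat.cast_ne_zero.mpr (Nat.factorial_ne_zero _)
  have hf2 : (i.factorial : ℂ) ≠ 0 := Nat.cast_ne_zero.mpr (Nat.factorial_ne_zero _)
  rw [div_mul_eq_mul_div, eq_div_iff (mul_ne_zero hgab hgkb)]
  field_simp
end
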